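/- Let A and B be (possibly dependent) exponentially distributed random variables with means β_A > 0 and β_B > 0 respectively, and correlation coefficient ν ∈ [0,1), whose difference Δ = B − A has density f_Δ(δ) = (1/√((β_B−β_A)² + 4β_Aβ_B(1−ν))) · exp(−|δ|√((β_B−β_A)² + 4β_Aβ_B(1−ν))/(2β_Aβ_B(1−ν))) · exp(δ(β_B−β_A)/(2β_Aβ_B(1−ν))). Then for all ζ in the open interval (ζ_lo, ζ_hi), where ζ_lo = −(√((β_B−β_A)² + 4β_Aβ_B(1−ν)) + β_A − β_B)/(2β_Aβ_B(1−ν)) and ζ_hi = (√((β_B−β_A)² + 4β_Aβ_B(1−ν)) − β_A + β_B)/(2β_Aβ_B(1−ν)), the integral ∫ exp(−ζδ) f_Δ(δ) dδ over ℝ equals 1/(1 + (β_B − β_A)ζ − β_Aβ_B(1−ν)ζ²). -/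

import Mathlib

open MeasureTheory Real Set

lemma integral_exp_neg_mul_Ioi' {c : ℝ} (hc : 0 < c) :
    ∫ x in Ioi (0:ℝ), Real.exp (-(c * x)) = c⁻¹ := by
  have := integral_comp_mul_left_Ioi (fun x => Real.exp (-x)) 0 hc
  simp only [mul_zero, smul_eq_mul, integral_exp_neg_Ioi, neg_zero, Real.exp_zero, mul_one] at this
  simpa using this

lemma integral_exp_mul_Iic' {c : ℝ} (hc : 0 < c) :
    ∫ x in Iic (0:ℝ), Real.exp (c * x) = c⁻¹ := by
  have := integral_comp_neg_Iic (0:ℝ) (fun x => Real.exp (-(c * x)))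
  simp only [mul_neg, neg_neg, neg_zero] at this
  rw [this, integral_exp_neg_mul_Ioi' hc]

lemma integrableOn_exp_mul_Iic' {c : ℝ} (hc : 0 < c) :
    IntegrableOn (fun x => Real.exp (c * x)) (Iic (0:ℝ)) := by
  rw [← Measure.map_neg_eq_self (volume : Measure ℝ)]
  have m : MeasurableEmbedding fun x : ℝ => -x :=
    (Homeomorph.neg ℝ).isClosedEmbedding.measurableEmbedding
  rw [m.integrableOn_map_iff]
  simp only [Function.comp_def, mul_neg, neg_preimage, neg_Iic, neg_zero]
  rw [integrableOn_Ici_iff_integrableOn_Ioi]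
  simpa [neg_mul] using exp_neg_integrableOn_Ioi 0 hc

lemma laplace_abs (a b : ℝ) (h : |a| < b) :
    ∫ δ : ℝ, Real.exp (a * δ - b * |δ|) = 2 * b / (b ^ 2 - a ^ 2) := by
  obtain ⟨h1, h2⟩ := abs_lt.mp h
  have hba : 0 < b - a := by linarith
  have hab : 0 < b + a := by linarith
  have hIoi : IntegrableOn (fun δ => Real.exp (a * δ - b * |δ|)) (Ioi 0) := by
    refine ((exp_neg_integrableOn_Ioi 0 hba).congr_fun (fun x hx => ?_) measurableSet_Ioi)
    rw [abs_of_pos (mem_Ioi.mp hx)]; ring_nf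
  have hIic : IntegrableOn (fun δ => Real.exp (a * δ - b * |δ|)) (Iic 0) := by
    refine ((integrableOn_exp_mul_Iic' hab).congr_fun (fun x hx => ?_) measurableSet_Iic)
    rw [abs_of_nonpos (mem_Iic.mp hx)]; ring_nf
  rw [← intervalIntegral.integral_Iic_add_Ioi hIic hIoi]
  have e1 : ∫ δ in Iic (0:ℝ), Real.exp (a * δ - b * |δ|) = (b + a)⁻¹ := by
    rw [setIntegral_congr_fun measurableSet_Iic
      (g := fun δ => Real.exp ((b + a) * δ)) (fun x hx => by
        rw [abs_of_nonpos (mem_Iic.mp hx)]; ring_nf)]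
    exact integral_exp_mul_Iic' hab
  have e2 : ∫ δ in Ioi (0:ℝ), Real.exp (a * δ - b * |δ|) = (b - a)⁻¹ := by
    rw [setIntegral_congr_fun measurableSet_Ioi
      (g := fun δ => Real.exp (-((b - a) * δ))) (fun x hx => by
        rw [abs_of_pos (mem_Ioi.mp hx)]; ring_nf)]
    exact integral_exp_neg_mul_Ioi' hba
  rw [e1, e2, inv_add_inv hab.ne' hba.ne']
  rw [div_eq_div_iff (by positivity) (by nlinarith)]
  ring
/-- Two-sided Laplace transform of the density of the difference of two dependent
exponential random variables, on its strip of convergence. -/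
theorem laplace_transform_exp_difference
    (βA βB ν : ℝ) (hβA : 0 < βA) (hβB : 0 < βB) (hν0 : 0 ≤ ν) (hν1 : ν < 1)
    (ζ : ℝ)
    (hζlo : -((Real.sqrt ((βB - βA) ^ 2 + 4 * βA * βB * (1 - ν)) + βA - βB)
        / (2 * βA * βB * (1 - ν))) < ζ)
    (hζhi : ζ < (Real.sqrt ((βB - βA) ^ 2 + 4 * βA * βB * (1 - ν)) - βA + βB)
        / (2 * βA * βB * (1 - ν))) :
    ∫ δ : ℝ, Real.exp (-ζ * δ) *
        ((1 / Real.sqrt ((βB - βA) ^ 2 + 4 * βA * βB * (1 - ν)))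
          * Real.exp (-|δ| * Real.sqrt ((βB - βA) ^ 2 + 4 * βA * βB * (1 - ν))
              / (2 * βA * βB * (1 - ν)))
          * Real.exp (δ * (βB - βA) / (2 * βA * βB * (1 - ν))))
      = 1 / (1 + (βB - βA) * ζ - βA * βB * (1 - ν) * ζ ^ 2) := by
  have h1ν : (0:ℝ) < 1 - ν := by linarith
  set c : ℝ := 2 * βA * βB * (1 - ν) with hc_def
  have hc : 0 < c := mul_pos (by positivity) h1ν
  set D : ℝ := (βB - βA) ^ 2 + 4 * βA * βB * (1 - ν) with hD_def
  have hD : 0 < D := add_pos_of_nonneg_of_pos (sq_nonneg _) (mul_pos (by positivity) h1ν)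
  set s : ℝ := Real.sqrt D with hs_def
  have hs : 0 < s := Real.sqrt_pos.mpr hD
  have hs2 : s ^ 2 = D := Real.sq_sqrt hD.le
  set a : ℝ := (βB - βA) / c - ζ with ha_def
  set b : ℝ := s / c with hb_def
  have hb : 0 < b := by positivity
  have H1 : ζ * c < s - βA + βB := (lt_div_iff₀ hc).mp hζhi
  have H2 : -(s + βA - βB) < ζ * c := by
    rw [← neg_div] at hζlo
    exact (div_lt_iff₀ hc).mp hζlo
  have hbc : b * c = s := div_mul_cancel₀ _ hc.ne'
  have hac : a * c = (βB - βA) - ζ * c := by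
    rw [ha_def, sub_mul, div_mul_cancel₀ _ hc.ne']
  have hab : |a| < b := by
    rw [abs_lt]
    constructor
    · exact lt_of_mul_lt_mul_right (by rw [neg_mul, hbc, hac]; linarith) hc.le
    · exact lt_of_mul_lt_mul_right (by rw [hbc, hac]; linarith) hc.le
  have step : ∫ δ : ℝ, Real.exp (-ζ * δ) *
        ((1 / s) * Real.exp (-|δ| * s / c) * Real.exp (δ * (βB - βA) / c))
      = (1 / s) * ∫ δ : ℝ, Real.exp (a * δ - b * |δ|) := by
    rw [← integral_const_mul]
    congr 1
    funext δ
    rw [mul_comm (Real.exp (-ζ * δ)), mul_assoc, mul_assoc, ← Real.exp_add, ← Real.exp_add]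
    congr 1
    rw [ha_def, hb_def]
    field_simp
    ring
  rw [step, laplace_abs a b hab]
  have hba2 : 0 < b ^ 2 - a ^ 2 := by
    have := abs_nonneg a
    nlinarith [sq_abs a, abs_lt.mp hab]
  have hK : c * (b ^ 2 - a ^ 2) = 2 * (1 + (βB - βA) * ζ - βA * βB * (1 - ν) * ζ ^ 2) := by
    have hb2 : b ^ 2 = D / c ^ 2 := by rw [hb_def, div_pow, hs2]
    rw [hb2, ha_def]
    have hcD : D = (βB - βA) ^ 2 + 2 * c := by rw [hD_def, hc_def]; ring
    rw [hcD, hc_def]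
    field_simp
    ring
  have hKpos : 0 < 1 + (βB - βA) * ζ - βA * βB * (1 - ν) * ζ ^ 2 := by nlinarith
  rw [div_mul_div_comm, one_mul, div_eq_div_iff (by positivity) hKpos.ne']
  linear_combination (-b) * hK + (b ^ 2 - a ^ 2) * hbc
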